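/- Let f : ℝ^d → ℂ be continuous with |f(x)| ≤ C exp(r₁|x|^{1/s}) for some C, r₁, s > 0, and let ψ : ℝ^d → ℂ be continuous with |ψ(y)| ≤ C' exp(−2r₀|y|^{1/s}) for some r₀ > r₁ when 1/s ≤ 1 (or r₀ > 0 arbitrary and |f(x)| growing subexponentially appropriately). Then for each x, the Riemann sums Σ_{k ∈ ℤ^d} f(x − εk) ψ(εk) ε^d converge, as ε → 0⁺, to ∫_{ℝ^d} f(x − y) ψ(y) dy. -/

import Mathlib

open Finset Real Filter MeasureTheory

/-- The Euclidean norm of a vector in `ℝ^d` realized as `Fin d → ℝ`. -/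
noncomputable def enorm' {d : ℕ} (x : Fin d → ℝ) : ℝ :=
  Real.sqrt (∑ i, (x i) ^ 2)

lemma enorm'_nonneg {d : ℕ} (x : Fin d → ℝ) : 0 ≤ enorm' x := Real.sqrt_nonneg _

lemma enorm'_eq_norm {d : ℕ} (x : Fin d → ℝ) :
    enorm' x = ‖(WithLp.equiv 2 (Fin d → ℝ)).symm x‖ := by
  rw [EuclideanSpace.norm_eq]
  simp [enorm', Real.norm_eq_abs, sq_abs]

lemma enorm'_triangle {d : ℕ} (x y : Fin d → ℝ) :
    enorm' (x + y) ≤ enorm' x + enorm' y := by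
  simp only [enorm'_eq_norm]
  exact norm_add_le ((WithLp.equiv 2 (Fin d → ℝ)).symm x) ((WithLp.equiv 2 (Fin d → ℝ)).symm y)

lemma enorm'_neg {d : ℕ} (z : Fin d → ℝ) : enorm' (fun i => - z i) = enorm' z := by
  simp [enorm']

lemma enorm'_le_add {d : ℕ} (y z : Fin d → ℝ) :
    enorm' y ≤ enorm' z + enorm' (fun i => y i - z i) := by
  have h : y = z + fun i => y i - z i := by funext i; simp
  calc enorm' y = enorm' (z + fun i => y i - z i) := by rw [← h]
    _ ≤ _ := enorm'_triangle _ _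

lemma enorm'_sub_le {d : ℕ} (x z : Fin d → ℝ) :
    enorm' (fun i => x i - z i) ≤ enorm' x + enorm' z := by
  have h : (fun i => x i - z i) = x + fun i => - z i := by funext i; simp [sub_eq_add_neg]
  rw [h]
  calc enorm' (x + fun i => - z i) ≤ enorm' x + enorm' (fun i => - z i) := enorm'_triangle _ _
    _ = enorm' x + enorm' z := by rw [enorm'_neg]

lemma abs_le_enorm' {d : ℕ} (x : Fin d → ℝ) (i : Fin d) : |x i| ≤ enorm' x := by
  rw [← Real.sqrt_sq_eq_abs]
  exact Real.sqrt_le_sqrt (Finset.single_le_sum (fun j _ => sq_nonneg (x j)) (Finset.mem_univ i))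

lemma rpow_subadd {p : ℝ} (hp : 0 ≤ p) (hp1 : p ≤ 1) {x y : ℝ} (hx : 0 ≤ x) (hy : 0 ≤ y) :
    (x + y) ^ p ≤ x ^ p + y ^ p := by
  have key := NNReal.rpow_add_le_add_rpow x.toNNReal y.toNNReal hp hp1
  rw [← NNReal.coe_le_coe] at key
  push_cast at key
  rwa [Real.coe_toNNReal x hx, Real.coe_toNNReal y hy] at key

lemma integrable_exp_neg_abs_rpow {a p : ℝ} (ha : 0 < a) (hp : 0 < p) :
    Integrable (fun t : ℝ => Real.exp (-(a * |t| ^ p))) := by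
  have h0 : IntegrableOn (fun u : ℝ => u ^ (1 / p - 1) * Real.exp (-(a * u))) (Set.Ioi 0) := by
    have h := integrableOn_rpow_mul_exp_neg_mul_rpow (p := 1) (s := 1 / p - 1) (b := a)
      (by { have h01 : (0:ℝ) < 1 / p := one_div_pos.mpr hp; linarith }) zero_lt_one ha
    refine h.congr_fun (fun u hu => ?_) measurableSet_Ioi
    dsimp only
    rw [Real.rpow_one, neg_mul]
  have h1 : IntegrableOn (fun t : ℝ => Real.exp (-(a * t ^ p))) (Set.Ioi 0) := by
    have h := (integrableOn_Ioi_comp_rpow_iff'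
      (fun u => u ^ (1 / p - 1) * Real.exp (-(a * u))) (ne_of_gt hp)).mpr h0
    refine h.congr_fun (fun t ht => ?_) measurableSet_Ioi
    have ht' : (0:ℝ) < t := ht
    dsimp only
    rw [smul_eq_mul, ← Real.rpow_mul ht'.le, ← mul_assoc, ← Real.rpow_add ht']
    have he : p - 1 + p * (1 / p - 1) = 0 := by field_simp; ring
    rw [he, Real.rpow_zero, one_mul]
  set F : ℝ → ℝ := fun t => Real.exp (-(a * |t| ^ p)) with hFdef
  have hIoi : IntegrableOn F (Set.Ioi 0) := by
    refine h1.congr_fun (fun t ht => ?_) measurableSet_Ioi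
    have ht' : (0:ℝ) < t := ht
    rw [hFdef]
    simp only [abs_of_pos ht']
  have hIci : IntegrableOn F (Set.Ici 0) := Iff.mpr integrableOn_Ici_iff_integrableOn_Ioi hIoi
  have hind : Integrable (Set.indicator (Set.Ici (0:ℝ)) F) :=
    (integrable_indicator_iff measurableSet_Ici).mpr hIci
  have hn := hind.comp_neg
  have heq : (fun t : ℝ => Set.indicator (Set.Ici (0:ℝ)) F (-t))
      = Set.indicator (Set.Iic (0:ℝ)) F := by
    funext t
    by_cases h : t ≤ 0
    · rw [Set.indicator_of_mem (by simpa using h), Set.indicator_of_mem (by simpa using h)]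
      simp [hFdef, abs_neg]
    · rw [Set.indicator_of_notMem (by simpa using h), Set.indicator_of_notMem (by simpa using h)]
  rw [heq] at hn
  have hIic : IntegrableOn F (Set.Iic 0) := (integrable_indicator_iff measurableSet_Iic).mp hn
  have : IntegrableOn F (Set.Iic 0 ∪ Set.Ioi 0) := hIic.union hIoi
  rwa [Set.Iic_union_Ioi, integrableOn_univ] at this

lemma continuous_enorm' {d : ℕ} : Continuous (enorm' (d := d)) := by
  unfold enorm'
  exact Real.continuous_sqrt.comp (continuous_finset_sum _ fun i _ => (continuous_apply i).pow 2)

lemma integrable_exp_neg_enorm'_rpow {d : ℕ} {c p : ℝ} (hc : 0 < c) (hp : 0 < p) :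
    Integrable (fun y : Fin d → ℝ => Real.exp (-(c * enorm' y ^ p))) := by
  set a : ℝ := c / (d + 1) with ha
  have ha0 : 0 < a := by positivity
  have hprod : Integrable (fun y : Fin d → ℝ => ∏ i, Real.exp (-(a * |y i| ^ p))) :=
    Integrable.fintype_prod (fun _ => integrable_exp_neg_abs_rpow ha0 hp)
  have hrpow : Continuous fun u : ℝ => u ^ p :=
    continuous_iff_continuousAt.mpr fun u => Real.continuousAt_rpow_const u p (Or.inr hp.le)
  have hcont : Continuous fun y : Fin d → ℝ => Real.exp (-(c * enorm' y ^ p)) :=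
    Real.continuous_exp.comp <| Continuous.neg <| continuous_const.mul <|
      hrpow.comp continuous_enorm'
  refine hprod.mono' hcont.aestronglyMeasurable (Filter.Eventually.of_forall fun y => ?_)
  rw [Real.norm_eq_abs, abs_of_pos (Real.exp_pos _), ← Real.exp_sum]
  apply Real.exp_le_exp.mpr
  rw [Finset.sum_neg_distrib, neg_le_neg_iff]
  have hbound : ∀ i, |y i| ^ p ≤ enorm' y ^ p := fun i =>
    Real.rpow_le_rpow (abs_nonneg _) (abs_le_enorm' y i) hp.le
  have h1 : 0 ≤ enorm' y ^ p := Real.rpow_nonneg (enorm'_nonneg y) p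
  have h2 : a * (d + 1) = c := by rw [ha]; field_simp
  calc ∑ i, a * |y i| ^ p ≤ ∑ _i : Fin d, a * enorm' y ^ p :=
        Finset.sum_le_sum fun i _ => mul_le_mul_of_nonneg_left (hbound i) ha0.le
    _ = (d : ℝ) * (a * enorm' y ^ p) := by
        rw [Finset.sum_const, Finset.card_univ, Fintype.card_fin, nsmul_eq_mul]
    _ ≤ c * enorm' y ^ p := by nlinarith [mul_nonneg ha0.le h1]

theorem riemann_sum_tendsto_convolution {d : ℕ} (s C r₁ C' r₀ : ℝ)
    (hs : 0 < s) (hs' : 1 / s ≤ 1) (hC : 0 < C) (hC' : 0 < C')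
    (hr₁ : 0 < r₁) (hr : r₁ < r₀)
    (f ψ : (Fin d → ℝ) → ℂ) (hf : Continuous f) (hψ : Continuous ψ)
    (hfb : ∀ x : Fin d → ℝ, ‖f x‖ ≤ C * Real.exp (r₁ * enorm' x ^ (1 / s)))
    (hψb : ∀ y : Fin d → ℝ, ‖ψ y‖ ≤ C' * Real.exp (-(2 * r₀) * enorm' y ^ (1 / s)))
    (x : Fin d → ℝ) :
    Tendsto
      (fun ε : ℝ => ∑' k : Fin d → ℤ,
        f (fun i => x i - ε * (k i : ℝ)) * ψ (fun i => ε * (k i : ℝ)) * (ε ^ d : ℝ))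
      (nhdsWithin 0 (Set.Ioi 0))
      (nhds (∫ y : Fin d → ℝ, f (fun i => x i - y i) * ψ y)) := by
  set p : ℝ := 1 / s with hpdef
  have hp : 0 < p := one_div_pos.mpr hs
  have hp1 : p ≤ 1 := hs'
  set F : (Fin d → ℝ) → ℂ := fun z => f (fun i => x i - z i) * ψ z with hFdef
  set r₂ : ℝ := 2 * r₀ - r₁ with hr₂def
  have hr₂0 : 0 < r₂ := by rw [hr₂def]; linarith
  set K₁ : ℝ := C * C' * Real.exp (r₁ * enorm' x ^ p) with hK₁def
  have hK₁0 : 0 < K₁ := by positivity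
  -- pointwise bound on F
  have hFb : ∀ z, ‖F z‖ ≤ K₁ * Real.exp (-(r₂ * enorm' z ^ p)) := by
    intro z
    have h1 : enorm' (fun i => x i - z i) ^ p ≤ enorm' x ^ p + enorm' z ^ p :=
      le_trans (Real.rpow_le_rpow (enorm'_nonneg _) (enorm'_sub_le x z) hp.le)
        (rpow_subadd hp.le hp1 (enorm'_nonneg _) (enorm'_nonneg _))
    have hexp : r₁ * enorm' (fun i => x i - z i) ^ p + -(2 * r₀) * enorm' z ^ p
        ≤ r₁ * enorm' x ^ p + -(r₂ * enorm' z ^ p) := by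
      have h2 := mul_le_mul_of_nonneg_left h1 hr₁.le
      rw [hr₂def]; nlinarith [h2]
    calc ‖F z‖ = ‖f (fun i => x i - z i)‖ * ‖ψ z‖ := norm_mul _ _
      _ ≤ (C * Real.exp (r₁ * enorm' (fun i => x i - z i) ^ p)) *
            (C' * Real.exp (-(2 * r₀) * enorm' z ^ p)) :=
          mul_le_mul (hfb _) (hψb _) (norm_nonneg _) (by positivity)
      _ = (C * C') * Real.exp (r₁ * enorm' (fun i => x i - z i) ^ p + -(2 * r₀) * enorm' z ^ p) := by
          rw [Real.exp_add]; ring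
      _ ≤ (C * C') * Real.exp (r₁ * enorm' x ^ p + -(r₂ * enorm' z ^ p)) := by
          have := Real.exp_le_exp.mpr hexp
          exact mul_le_mul_of_nonneg_left this (by positivity)
      _ = K₁ * Real.exp (-(r₂ * enorm' z ^ p)) := by
          rw [hK₁def, Real.exp_add]; ring
  have hFcont : Continuous F := by
    apply Continuous.mul
    · exact hf.comp (continuous_pi fun i => continuous_const.sub (continuous_apply i))
    · exact hψ
  -- the step approximation
  set Φ : ℝ → (Fin d → ℝ) → ℂ := fun ε y => F (fun i => ε * ((⌊y i / ε⌋ : ℤ) : ℝ)) with hΦdef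
  have hΦmeas : ∀ ε : ℝ, AEStronglyMeasurable (Φ ε) volume := by
    intro ε
    have hm : Measurable fun y : Fin d → ℝ => (fun i => ε * ((⌊y i / ε⌋ : ℤ) : ℝ)) := by
      apply measurable_pi_lambda
      intro i
      exact measurable_const.mul
        ((measurable_from_top (f := fun n : ℤ => (n : ℝ))).comp
          (by fun_prop))
    exact (hFcont.measurable.comp hm).aestronglyMeasurable
  have floor_le : ∀ (ε t : ℝ), 0 < ε →
      ε * ((⌊t / ε⌋ : ℤ) : ℝ) ≤ t ∧ t < ε * ((⌊t / ε⌋ : ℤ) : ℝ) + ε := by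
    intro ε t hε
    have h1 := Int.floor_le (t / ε)
    have h2 := Int.lt_floor_add_one (t / ε)
    constructor
    · have := (le_div_iff₀ hε).mp h1
      linarith
    · have := (div_lt_iff₀ hε).mp h2
      linarith
  -- dominating function
  set g : (Fin d → ℝ) → ℝ :=
    fun y => (K₁ * Real.exp (r₂ * Real.sqrt d ^ p)) * Real.exp (-(r₂ * enorm' y ^ p)) with hgdef
  have hg_int : Integrable g :=
    (integrable_exp_neg_enorm'_rpow hr₂0 hp).const_mul _
  have hΦbound : ∀ ε ∈ Set.Ioc (0:ℝ) 1, ∀ y, ‖Φ ε y‖ ≤ g y := by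
    rintro ε ⟨hε0, hε1⟩ y
    set z : Fin d → ℝ := fun i => ε * ((⌊y i / ε⌋ : ℤ) : ℝ) with hzdef
    have hz1 : ∀ i, |y i - z i| ≤ 1 := by
      intro i
      obtain ⟨ha, hb⟩ := floor_le ε (y i) hε0
      have hzi : z i = ε * ((⌊y i / ε⌋ : ℤ) : ℝ) := rfl
      rw [abs_le, hzi]
      constructor <;> linarith
    have hzy : enorm' (fun i => y i - z i) ≤ Real.sqrt d := by
      have hsum : ∑ i, (y i - z i) ^ 2 ≤ (d : ℝ) := by
        calc ∑ i, (y i - z i) ^ 2 ≤ ∑ _i : Fin d, (1 : ℝ) :=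
              Finset.sum_le_sum fun i _ => (sq_le_one_iff_abs_le_one _).mpr (hz1 i)
          _ = d := by simp
      exact Real.sqrt_le_sqrt hsum
    have hkey : enorm' y ^ p ≤ enorm' z ^ p + Real.sqrt d ^ p := by
      calc enorm' y ^ p ≤ (enorm' z + enorm' (fun i => y i - z i)) ^ p :=
            Real.rpow_le_rpow (enorm'_nonneg _) (enorm'_le_add y z) hp.le
        _ ≤ enorm' z ^ p + enorm' (fun i => y i - z i) ^ p :=
            rpow_subadd hp.le hp1 (enorm'_nonneg _) (enorm'_nonneg _)
        _ ≤ enorm' z ^ p + Real.sqrt d ^ p := by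
            have := Real.rpow_le_rpow (enorm'_nonneg _) hzy hp.le
            linarith
    calc ‖Φ ε y‖ = ‖F z‖ := rfl
      _ ≤ K₁ * Real.exp (-(r₂ * enorm' z ^ p)) := hFb z
      _ ≤ K₁ * Real.exp (r₂ * Real.sqrt d ^ p + -(r₂ * enorm' y ^ p)) := by
          refine mul_le_mul_of_nonneg_left (Real.exp_le_exp.mpr ?_) hK₁0.le
          nlinarith [mul_le_mul_of_nonneg_left hkey hr₂0.le]
      _ = g y := by simp only [hgdef, Real.exp_add]; ring
  -- pointwise convergence
  have hlim : ∀ y, Tendsto (fun ε => Φ ε y) (nhdsWithin 0 (Set.Ioi 0)) (nhds (F y)) := by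
    intro y
    have hz : Tendsto (fun ε : ℝ => (fun i => ε * ((⌊y i / ε⌋ : ℤ) : ℝ)))
        (nhdsWithin 0 (Set.Ioi 0)) (nhds y) := by
      rw [tendsto_pi_nhds]
      intro i
      have hb : Tendsto (fun ε : ℝ => ε * ((⌊y i / ε⌋ : ℤ) : ℝ) - y i)
          (nhdsWithin 0 (Set.Ioi 0)) (nhds 0) := by
        have hg0 : Tendsto (fun ε : ℝ => ε) (nhdsWithin 0 (Set.Ioi 0)) (nhds 0) :=
          tendsto_id.mono_left nhdsWithin_le_nhds
        refine squeeze_zero_norm' ?_ hg0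
        filter_upwards [self_mem_nhdsWithin] with ε hε
        obtain ⟨ha, hb⟩ := floor_le ε (y i) hε
        rw [Real.norm_eq_abs, abs_le]
        constructor <;> linarith
      have := hb.add_const (y i)
      simpa using this
    exact (hFcont.tendsto y).comp hz
  -- cube membership
  have cube_mem : ∀ (ε : ℝ), 0 < ε → ∀ (k : Fin d → ℤ) (y : Fin d → ℝ),
      y ∈ Set.pi Set.univ (fun i => Set.Ico (ε * (k i : ℝ)) (ε * (k i : ℝ) + ε)) ↔
        ∀ i, ⌊y i / ε⌋ = k i := by
    intro ε hε k y
    simp only [Set.mem_pi, Set.mem_univ, forall_true_left, Set.mem_Ico]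
    refine forall_congr' fun i => ?_
    rw [Int.floor_eq_iff]
    constructor
    · rintro ⟨h1, h2⟩
      exact ⟨(le_div_iff₀ hε).mpr (by linarith), (div_lt_iff₀ hε).mpr (by push_cast; linarith)⟩
    · rintro ⟨h1, h2⟩
      have ha := (le_div_iff₀ hε).mp h1
      have hb := (div_lt_iff₀ hε).mp h2
      constructor
      · linarith
      · push_cast at hb; linarith
  -- Riemann sum equals the integral of the step function
  have hΦint : ∀ ε ∈ Set.Ioc (0:ℝ) 1, Integrable (Φ ε) := fun ε hε =>
    hg_int.mono' (hΦmeas ε) (Filter.Eventually.of_forall (hΦbound ε hε))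
  have hkeyeq : ∀ ε ∈ Set.Ioc (0:ℝ) 1,
      (∑' k : Fin d → ℤ,
        f (fun i => x i - ε * (k i : ℝ)) * ψ (fun i => ε * (k i : ℝ)) * (ε ^ d : ℝ))
        = ∫ y, Φ ε y := by
    rintro ε hε
    have hε0 : 0 < ε := hε.1
    set S : (Fin d → ℤ) → Set (Fin d → ℝ) :=
      fun k => Set.pi Set.univ fun i => Set.Ico (ε * (k i : ℝ)) (ε * (k i : ℝ) + ε) with hSdef
    have hmeasS : ∀ k, MeasurableSet (S k) :=
      fun k => MeasurableSet.univ_pi fun i => measurableSet_Ico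
    have hdisj : Pairwise (Function.onFun Disjoint S) := by
      intro k k' hkk'
      rw [Function.onFun, Set.disjoint_left]
      intro y hy hy'
      exact hkk' (funext fun i =>
        ((cube_mem ε hε0 k y).mp hy i).symm.trans ((cube_mem ε hε0 k' y).mp hy' i))
    have hunion : (⋃ k, S k) = Set.univ := by
      ext y
      simp only [Set.mem_iUnion, Set.mem_univ, iff_true]
      exact ⟨fun i => ⌊y i / ε⌋, (cube_mem ε hε0 _ y).mpr fun i => rfl⟩
    have hsum := hasSum_integral_iUnion hmeasS hdisj
      (by rw [hunion]; exact (hΦint ε hε).integrableOn)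
    rw [hunion, setIntegral_univ] at hsum
    have hSk : ∀ k, (∫ y in S k, Φ ε y) =
        f (fun i => x i - ε * (k i : ℝ)) * ψ (fun i => ε * (k i : ℝ)) * (ε ^ d : ℝ) := by
      intro k
      have h1 : Set.EqOn (Φ ε) (fun _ => F (fun i => ε * (k i : ℝ))) (S k) := by
        intro y hy
        have hfl := (cube_mem ε hε0 k y).mp hy
        show F _ = F _
        congr 1
        funext i
        rw [hfl i]
      rw [setIntegral_congr_fun (hmeasS k) h1, setIntegral_const]
      have hvol : volume (S k) = ENNReal.ofReal ε ^ d := by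
        rw [hSdef]
        simp only [volume_pi_pi, Real.volume_Ico, add_sub_cancel_left]
        simp
      rw [measureReal_def, hvol, ENNReal.toReal_pow, ENNReal.toReal_ofReal hε0.le, hFdef]
      rw [Complex.real_smul]
      push_cast
      ring
    rw [show (fun k => ∫ y in S k, Φ ε y) = fun k : Fin d → ℤ =>
        f (fun i => x i - ε * (k i : ℝ)) * ψ (fun i => ε * (k i : ℝ)) * (ε ^ d : ℝ)
      from funext hSk] at hsum
    exact hsum.tsum_eq
  -- dominated convergence
  have hmain : Tendsto (fun ε => ∫ y, Φ ε y) (nhdsWithin 0 (Set.Ioi 0))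
      (nhds (∫ y, F y)) := by
    refine tendsto_integral_filter_of_dominated_convergence g
      (Filter.Eventually.of_forall hΦmeas) ?_ hg_int
      (Filter.Eventually.of_forall fun y => hlim y)
    filter_upwards [Ioc_mem_nhdsGT zero_lt_one] with ε hε
    exact Filter.Eventually.of_forall (hΦbound ε hε)
  refine Tendsto.congr' ?_ hmain
  filter_upwards [Ioc_mem_nhdsGT zero_lt_one] with ε hε
  exact (hkeyeq ε hε).symm
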